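/- The Hamiltonian H(p) = Tr(A p⊗p) + B·p + ∫ (e^{p·y} − 1 − (p·y)1_{|y|<1}) J(y) dy is superlinear: H(p)/|p| → ∞ as |p| → ∞. In fact there exists c(J) > 0 such that H(p) ≥ c(J) e^{ρ₀|p|/2} + O(|p|³). -/

import Mathlib

open MeasureTheory Real Set Filter
open scoped RealInnerProductSpace

private lemma aux_abs_exp (x : ℝ) : |Real.exp x - 1 - x| ≤ 3 * Real.exp |x| * x ^ 2 := by
  rcases le_or_gt |x| 1 with h | h
  · have h1 := Real.abs_exp_sub_one_sub_id_le h
    have h2 : (1:ℝ) ≤ Real.exp |x| := Real.one_le_exp (abs_nonneg x)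
    nlinarith [sq_nonneg x]
  · have h1 : Real.exp x ≤ Real.exp |x| := Real.exp_le_exp.2 (le_abs_self x)
    have h2 : (1:ℝ) ≤ Real.exp |x| := Real.one_le_exp (abs_nonneg x)
    have h3 : |x| * |x| = x ^ 2 := by rw [← abs_mul, abs_mul_self]; ring
    have h4 : |Real.exp x - 1 - x| ≤ Real.exp x + 1 + |x| := by
      have := abs_sub (Real.exp x - 1) x
      have := abs_sub (Real.exp x) (1:ℝ)
      have h5 : |Real.exp x| = Real.exp x := abs_of_pos (Real.exp_pos x)
      calc |Real.exp x - 1 - x| ≤ |Real.exp x - 1| + |x| := abs_sub _ _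
        _ ≤ |Real.exp x| + |1| + |x| := by linarith [abs_sub (Real.exp x) (1:ℝ)]
        _ = Real.exp x + 1 + |x| := by rw [h5, abs_one]
    have h6 : (1:ℝ) ≤ x ^ 2 := by nlinarith
    nlinarith [Real.exp_pos x, mul_le_mul_of_nonneg_left h6 (le_of_lt (Real.exp_pos |x|)),
      mul_le_mul_of_nonneg_right h1 (le_of_lt (lt_of_lt_of_le one_pos h6))]

private lemma aux_t_le {t : ℝ} (ht : 0 ≤ t) : t ≤ 1 + t ^ 3 := by
  nlinarith [mul_nonneg ht (sq_nonneg (t-1)), sq_nonneg (t-1)]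

private lemma aux_tendsto (c C a : ℝ) (hc : 0 < c) (ha : 0 < a) :
    Tendsto (fun t : ℝ => (c * Real.exp (a * t) - C * (1 + t ^ 3)) / t) atTop atTop := by
  have hat : Tendsto (fun t : ℝ => a * t) atTop atTop := tendsto_id.const_mul_atTop ha
  have h1 : Tendsto (fun t : ℝ => Real.exp (a * t) / (a * t) ^ 4) atTop atTop :=
    (Real.tendsto_exp_div_pow_atTop 4).comp hat
  have h1' : Tendsto (fun t : ℝ => Real.exp (a * t) / t ^ 4) atTop atTop := by
    have := h1.const_mul_atTop (show (0:ℝ) < a ^ 4 by positivity)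
    apply this.congr'
    filter_upwards [eventually_gt_atTop (0:ℝ)] with t ht
    field_simp
  have h2 : Tendsto (fun t : ℝ => C / t ^ 4 + C / t) atTop (nhds 0) := by
    have := (tendsto_const_nhds (x := C)).div_atTop (tendsto_pow_atTop (n := 4) (by norm_num))
    have h3 := (tendsto_const_nhds (x := C)).div_atTop (tendsto_id (α := ℝ) (x := atTop))
    simpa using this.add h3
  have hu : Tendsto (fun t : ℝ => c * (Real.exp (a * t) / t ^ 4) + (-(C / t ^ 4 + C / t)))
      atTop atTop := (h1'.const_mul_atTop hc).atTop_add (h2.neg.congr (by simp))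
  have hprod := (tendsto_pow_atTop (n := 3) (by norm_num) : Tendsto (fun t:ℝ => t^3) atTop atTop).atTop_mul_atTop₀ hu
  apply hprod.congr'
  filter_upwards [eventually_gt_atTop (0:ℝ)] with t ht
  field_simp
  ring
private lemma aux_near1 (a ρ x s : ℝ) (ha : 0 ≤ a) (hρ : 0 ≤ ρ) (hxs : |x| ≤ a * s)
    (hs0 : 0 ≤ s) (hsρ : s ≤ ρ/2) (hs1 : s < 1) :
    |Real.exp x - 1 - x| ≤
      (3*Real.exp (a*(ρ/2))*a^2 + (Real.exp (a*(ρ/2)) + 1)) * min 1 (s^2) := by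
  have hx : |x| ≤ a*(ρ/2) := hxs.trans (mul_le_mul_of_nonneg_left hsρ ha)
  have hx2 : x^2 ≤ (a*s)^2 :=
    sq_le_sq' (by linarith [neg_abs_le x]) (by linarith [le_abs_self x])
  have hmin : min 1 (s^2) = s^2 := min_eq_right (by nlinarith)
  rw [hmin]
  have he : Real.exp |x| ≤ Real.exp (a*(ρ/2)) := Real.exp_le_exp.2 hx
  have hep := Real.exp_pos (a*(ρ/2))
  calc |Real.exp x - 1 - x| ≤ 3*(Real.exp |x|)*x^2 := aux_abs_exp x
    _ ≤ 3*Real.exp (a*(ρ/2))*x^2 := by nlinarith [sq_nonneg x]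
    _ ≤ 3*Real.exp (a*(ρ/2))*(a^2*s^2) := by nlinarith
    _ ≤ (3*Real.exp (a*(ρ/2))*a^2 + (Real.exp (a*(ρ/2)) + 1)) * s^2 := by
        nlinarith [sq_nonneg s]

private lemma aux_near2 (a ρ x s : ℝ) (ha : 0 ≤ a) (hρ : 0 ≤ ρ) (hxs : |x| ≤ a * s)
    (hsρ : s ≤ ρ/2) (hs1 : 1 ≤ s) :
    |Real.exp x - 1| ≤
      (3*Real.exp (a*(ρ/2))*a^2 + (Real.exp (a*(ρ/2)) + 1)) * min 1 (s^2) := by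
  have hx : |x| ≤ a*(ρ/2) := hxs.trans (mul_le_mul_of_nonneg_left hsρ ha)
  have hmin : min 1 (s^2) = 1 := min_eq_left (by nlinarith)
  rw [hmin, mul_one]
  have h2 : |Real.exp x - 1| ≤ Real.exp x + 1 := by
    rw [abs_sub_comm]
    refine (abs_sub _ _).trans ?_
    rw [abs_one, abs_of_pos (Real.exp_pos _)]; linarith
  have h3 : Real.exp x ≤ Real.exp |x| := Real.exp_le_exp.2 (le_abs_self _)
  have he : Real.exp |x| ≤ Real.exp (a*(ρ/2)) := Real.exp_le_exp.2 hx
  have hep := (Real.exp_pos (a*(ρ/2))).le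
  nlinarith [sq_nonneg a, mul_nonneg (mul_nonneg (by norm_num : (0:ℝ) ≤ 3) hep) (sq_nonneg a)]

private lemma aux_far (a x s i : ℝ) (ha : 0 ≤ a) (hs0 : 0 ≤ s) (hx : |x| ≤ a*s)
    (hi : |i| ≤ a*s) : |Real.exp x - 1 - i| ≤ (2+a) * Real.exp ((a+1)*s) := by
  have h1 : |Real.exp x - 1 - i| ≤ Real.exp x + 1 + a*s := by
    have h4 : |Real.exp x - 1| ≤ Real.exp x + 1 := by
      rw [abs_sub_comm]
      refine (abs_sub _ _).trans ?_
      rw [abs_one, abs_of_pos (Real.exp_pos _)]; linarith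
    calc |Real.exp x - 1 - i| ≤ |Real.exp x - 1| + |i| := abs_sub _ _
      _ ≤ Real.exp x + 1 + a*s := by linarith
  have h2 : Real.exp x ≤ Real.exp ((a+1)*s) := by
    refine Real.exp_le_exp.2 ((le_abs_self _).trans (hx.trans ?_))
    nlinarith
  have h3 : (1:ℝ) ≤ Real.exp ((a+1)*s) := Real.one_le_exp (by positivity)
  have h4 : s ≤ Real.exp ((a+1)*s) := by
    refine le_trans ?_ (Real.exp_le_exp.2 (show s ≤ (a+1)*s by nlinarith))
    linarith [Real.add_one_le_exp s]
  nlinarith [mul_le_mul_of_nonneg_left h4 ha]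

set_option maxHeartbeats 2000000 in
/-- The Hamiltonian is superlinear: `H(p)/‖p‖ → ∞` as `‖p‖ → ∞`; in fact
there are `c(J) > 0` and `C ≥ 0` with `H(p) ≥ c(J) e^{ρ₀‖p‖/2} - C(1 + ‖p‖³)`. -/
theorem stmt_1 {N : ℕ}
    (J : EuclideanSpace ℝ (Fin N) → ℝ) (ρ₀ : ℝ) (hρ₀ : 0 < ρ₀)
    (hJnn : ∀ y, 0 ≤ J y)
    (hJC1 : ContDiffOn ℝ 1 J {(0 : EuclideanSpace ℝ (Fin N))}ᶜ)
    (hJcont : ContinuousOn J {(0 : EuclideanSpace ℝ (Fin N))}ᶜ)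
    (hJpos : ∀ y ∈ Metric.ball (0 : EuclideanSpace ℝ (Fin N)) ρ₀ \ {0}, 0 < J y)
    (hsupp : Metric.ball (0 : EuclideanSpace ℝ (Fin N)) ρ₀ ⊆ Function.support J)
    (hint : Integrable (fun y => min 1 (‖y‖ ^ 2) * J y))
    (hexp : ∀ β > (0:ℝ), IntegrableOn (fun y => Real.exp (β * ‖y‖) * J y)
      {y : EuclideanSpace ℝ (Fin N) | ρ₀ / 2 < ‖y‖})
    (A : EuclideanSpace ℝ (Fin N) →L[ℝ] EuclideanSpace ℝ (Fin N))
    (hAsym : ∀ x y, ⟪A x, y⟫ = ⟪x, A y⟫)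
    (hAnn : ∀ x, 0 ≤ ⟪x, A x⟫)
    (B : EuclideanSpace ℝ (Fin N))
    (H : EuclideanSpace ℝ (Fin N) → ℝ)
    (hH : ∀ p, H p = ⟪p, A p⟫ + ⟪B, p⟫ +
      ∫ y, (Real.exp ⟪p, y⟫ - 1 -
        Set.indicator {y : EuclideanSpace ℝ (Fin N) | ‖y‖ < 1} (fun y => ⟪p, y⟫) y) * J y) :
    Filter.Tendsto (fun p => H p / ‖p‖)
      (Bornology.cobounded (EuclideanSpace ℝ (Fin N))) Filter.atTop ∧
    ∃ c > (0:ℝ), ∃ C : ℝ, 0 ≤ C ∧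
      ∀ p, c * Real.exp (ρ₀ * ‖p‖ / 2) - C * (1 + ‖p‖ ^ 3) ≤ H p := by
  classical
  have hH0 : H 0 = 0 := by
    rw [hH 0]
    have hz : ∀ y : EuclideanSpace ℝ (Fin N),
        (Real.exp ⟪(0:EuclideanSpace ℝ (Fin N)), y⟫ - 1 -
          Set.indicator {y : EuclideanSpace ℝ (Fin N) | ‖y‖ < 1}
            (fun y => ⟪(0:EuclideanSpace ℝ (Fin N)), y⟫) y) * J y = 0 := by
      intro y
      have h1 : (fun y : EuclideanSpace ℝ (Fin N) => ⟪(0:EuclideanSpace ℝ (Fin N)), y⟫)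
          = fun _ => (0:ℝ) := by funext z; exact inner_zero_left z
      rw [h1]
      simp
    simp only [hz]
    simp [inner_zero_left, inner_zero_right]
  rcases subsingleton_or_nontrivial (EuclideanSpace ℝ (Fin N)) with hsub | hnt
  · constructor
    · have hb : BoundedSpace (EuclideanSpace ℝ (Fin N)) := by
        constructor
        have : (Set.univ : Set (EuclideanSpace ℝ (Fin N))) ⊆ {0} := by
          intro x _; exact Subsingleton.elim x 0
        exact (Bornology.isBounded_singleton).subset this
      rw [Bornology.cobounded_eq_bot_iff.2 hb]
      exact tendsto_bot
    · refine ⟨1, one_pos, 1, zero_le_one, fun p => ?_⟩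
      have hp : p = (0 : EuclideanSpace ℝ (Fin N)) := Subsingleton.elim _ _
      rw [hp, hH0]
      simp
  · -- main case
    have key : ∃ c > (0:ℝ), ∃ C : ℝ, 0 ≤ C ∧
        ∀ p, c * Real.exp (ρ₀ * ‖p‖ / 2) - C * (1 + ‖p‖ ^ 3) ≤ H p := by
      -- unit vector and compact annulus minimum
      obtain ⟨u, hu⟩ : ∃ v : EuclideanSpace ℝ (Fin N), ‖v‖ = 1 := exists_norm_eq _ zero_le_one
      set K : Set (EuclideanSpace ℝ (Fin N)) :=
        Metric.closedBall 0 (7*ρ₀/8) \ Metric.ball 0 (5*ρ₀/8) with hKdef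
      have hKmem : ∀ y : EuclideanSpace ℝ (Fin N),
          5*ρ₀/8 ≤ ‖y‖ → ‖y‖ ≤ 7*ρ₀/8 → y ∈ K := by
        intro y h1 h2
        simp only [hKdef, Set.mem_diff, Metric.mem_closedBall, Metric.mem_ball,
          dist_zero_right, not_lt]
        exact ⟨h2, h1⟩
      have hKc : IsCompact K := (isCompact_closedBall _ _).diff Metric.isOpen_ball
      have hKne : K.Nonempty := by
        refine ⟨(5*ρ₀/8) • u, hKmem _ ?_ ?_⟩ <;>
          rw [norm_smul, hu, Real.norm_eq_abs, abs_of_pos (by positivity)] <;> nlinarith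
      have hKsub : K ⊆ {(0 : EuclideanSpace ℝ (Fin N))}ᶜ := by
        intro y hy
        simp only [hKdef, Set.mem_diff, Metric.mem_closedBall, Metric.mem_ball,
          dist_zero_right, not_lt] at hy
        simp only [Set.mem_compl_iff, Set.mem_singleton_iff]
        intro h0
        rw [h0, norm_zero] at hy
        nlinarith [hy.2]
      obtain ⟨y₀, hy₀K, hy₀min⟩ := hKc.exists_isMinOn hKne (hJcont.mono hKsub)
      have hy₀n : 5*ρ₀/8 ≤ ‖y₀‖ ∧ ‖y₀‖ ≤ 7*ρ₀/8 := by
        simp only [hKdef, Set.mem_diff, Metric.mem_closedBall, Metric.mem_ball,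
          dist_zero_right, not_lt] at hy₀K
        exact ⟨hy₀K.2, hy₀K.1⟩
      set m := J y₀ with hmdef
      have hm : 0 < m := by
        refine hJpos y₀ ⟨Metric.mem_ball.2 ?_, ?_⟩
        · rw [dist_zero_right]; nlinarith [hy₀n.2]
        · simp only [Set.mem_singleton_iff]
          intro h0; rw [h0, norm_zero] at hy₀n; nlinarith [hy₀n.1]
      -- volume constant
      set ν := (volume (Metric.closedBall (0 : EuclideanSpace ℝ (Fin N)) (ρ₀/8))).toReal
        with hνdef
      have hνfin : volume (Metric.closedBall (0 : EuclideanSpace ℝ (Fin N)) (ρ₀/8)) < ⊤ :=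
        measure_closedBall_lt_top
      have hν : 0 < ν := by
        refine ENNReal.toReal_pos ?_ hνfin.ne
        refine (lt_of_lt_of_le (Metric.measure_ball_pos volume 0 (by positivity))
          (measure_mono Metric.ball_subset_closedBall)).ne'
      -- baseline integral
      set I₀ := ∫ y, min 1 (‖y‖^2) * J y with hI₀def
      have hI₀ : 0 ≤ I₀ :=
        integral_nonneg fun y => mul_nonneg (le_min zero_le_one (sq_nonneg _)) (hJnn y)
      -- measurability of J
      have hJm : AEStronglyMeasurable J volume := by
        have h0 : volume ({(0 : EuclideanSpace ℝ (Fin N))} : Set (EuclideanSpace ℝ (Fin N))) = 0 :=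
          measure_singleton 0
        have hres : (volume : Measure (EuclideanSpace ℝ (Fin N))).restrict
            {(0 : EuclideanSpace ℝ (Fin N))}ᶜ = volume := by
          rw [Measure.restrict_congr_set (t := Set.univ), Measure.restrict_univ]
          rw [ae_eq_univ, compl_compl]; exact h0
        rw [← hres]
        exact hJcont.aestronglyMeasurable isClosed_singleton.isOpen_compl.measurableSet
      have hOpen1 : IsOpen {y : EuclideanSpace ℝ (Fin N) | ‖y‖ < 1} :=
        isOpen_lt continuous_norm continuous_const
      -- integrability of the integrand
      have hInt : ∀ p : EuclideanSpace ℝ (Fin N),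
          Integrable (fun y => (Real.exp ⟪p, y⟫ - 1 -
            Set.indicator {y : EuclideanSpace ℝ (Fin N) | ‖y‖ < 1}
              (fun y => ⟪p, y⟫) y) * J y) := by
        intro p
        have hcont : Continuous fun y : EuclideanSpace ℝ (Fin N) => Real.exp ⟪p, y⟫ - 1 :=
          (Real.continuous_exp.comp (continuous_const.inner continuous_id)).sub continuous_const
        have hindm : Measurable (Set.indicator {y : EuclideanSpace ℝ (Fin N) | ‖y‖ < 1}
            (fun y => ⟪p, y⟫)) :=
          (continuous_const.inner (continuous_id :
            Continuous fun y : EuclideanSpace ℝ (Fin N) => y)).measurable.indicator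
            hOpen1.measurableSet
        have hfm : AEStronglyMeasurable (fun y => (Real.exp ⟪p, y⟫ - 1 -
            Set.indicator {y : EuclideanSpace ℝ (Fin N) | ‖y‖ < 1}
              (fun y => ⟪p, y⟫) y) * J y) volume :=
          (hcont.aestronglyMeasurable.sub hindm.aestronglyMeasurable).mul hJm
        rw [← integrableOn_univ]
        have hcover : (Set.univ : Set (EuclideanSpace ℝ (Fin N))) ⊆
            {y | ‖y‖ ≤ ρ₀/2} ∪ {y | ρ₀/2 < ‖y‖} := by
          intro y _
          rcases le_or_gt ‖y‖ (ρ₀/2) with h | h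
          · exact Or.inl h
          · exact Or.inr h
        refine (IntegrableOn.union ?_ ?_).mono_set hcover
        · -- near part
          refine Integrable.mono' ((hint.const_mul
              (3*Real.exp (‖p‖*(ρ₀/2))*‖p‖^2 + (Real.exp (‖p‖*(ρ₀/2)) + 1))).integrableOn)
            hfm.restrict ?_
          refine (ae_restrict_iff' (measurableSet_le continuous_norm.measurable
            measurable_const)).2 (ae_of_all _ ?_)
          intro y hy
          simp only [Set.mem_setOf_eq] at hy
          rw [Real.norm_eq_abs, abs_mul, abs_of_nonneg (hJnn y), ← mul_assoc]
          refine mul_le_mul_of_nonneg_right ?_ (hJnn y)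
          have hx : |⟪p, y⟫| ≤ ‖p‖*‖y‖ := abs_real_inner_le_norm p y
          by_cases h1 : ‖y‖ < 1
          · rw [Set.indicator_of_mem (show y ∈ {y : EuclideanSpace ℝ (Fin N) | ‖y‖ < 1}
              from h1)]
            exact aux_near1 ‖p‖ ρ₀ ⟪p, y⟫ ‖y‖ (norm_nonneg p) hρ₀.le hx (norm_nonneg y) hy h1
          · rw [Set.indicator_of_notMem (show y ∉ {y : EuclideanSpace ℝ (Fin N) | ‖y‖ < 1}
              from h1), sub_zero]
            exact aux_near2 ‖p‖ ρ₀ ⟪p, y⟫ ‖y‖ (norm_nonneg p) hρ₀.le hx hy (not_lt.1 h1)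
        · -- far part
          refine Integrable.mono' ((hexp (‖p‖+1) (by positivity)).const_mul (2 + ‖p‖))
            hfm.restrict ?_
          refine (ae_restrict_iff' (measurableSet_lt measurable_const
            continuous_norm.measurable)).2 (ae_of_all _ ?_)
          intro y _
          rw [Real.norm_eq_abs, abs_mul, abs_of_nonneg (hJnn y), ← mul_assoc]
          refine mul_le_mul_of_nonneg_right ?_ (hJnn y)
          have hx : |⟪p, y⟫| ≤ ‖p‖*‖y‖ := abs_real_inner_le_norm p y
          have hind : |Set.indicator {y : EuclideanSpace ℝ (Fin N) | ‖y‖ < 1}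
              (fun y => ⟪p, y⟫) y| ≤ ‖p‖*‖y‖ := by
            refine le_trans ?_ hx
            have h8 := norm_indicator_le_norm_self
              (fun y : EuclideanSpace ℝ (Fin N) => ⟪p, y⟫) y
              (s := {y : EuclideanSpace ℝ (Fin N) | ‖y‖ < 1})
            simpa [Real.norm_eq_abs] using h8
          exact aux_far ‖p‖ ⟪p, y⟫ ‖y‖ _ (norm_nonneg p) (norm_nonneg y) hx hind
      -- lower bound for nonzero p
      have hlow : ∀ p : EuclideanSpace ℝ (Fin N), p ≠ 0 →
          m * ν * (Real.exp ((5*ρ₀/8)*‖p‖) - 1 - ρ₀*‖p‖) - I₀ ≤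
          ∫ y, (Real.exp ⟪p, y⟫ - 1 -
            Set.indicator {y : EuclideanSpace ℝ (Fin N) | ‖y‖ < 1}
              (fun y => ⟪p, y⟫) y) * J y := by
        intro p hp
        set w := ‖p‖⁻¹ • p with hw
        have hwn : ‖w‖ = 1 := norm_smul_inv_norm hp
        set z := (3*ρ₀/4) • w with hz
        have hzn : ‖z‖ = 3*ρ₀/4 := by
          rw [hz, norm_smul, hwn, Real.norm_eq_abs, abs_of_pos (by positivity), mul_one]
        set S := Metric.closedBall z (ρ₀/8) with hS
        have hSmeas : MeasurableSet S := Metric.isClosed_closedBall.measurableSet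
        have hSvol : volume S =
            volume (Metric.closedBall (0 : EuclideanSpace ℝ (Fin N)) (ρ₀/8)) :=
          Measure.addHaar_closedBall_center volume z (ρ₀/8)
        have hSfin : volume S < ⊤ := by rw [hSvol]; exact hνfin
        set M := Real.exp ((5*ρ₀/8)*‖p‖) - 1 - ρ₀*‖p‖ with hM
        have hgint : Integrable (S.indicator fun _ => m*M) := by
          rw [integrable_indicator_iff hSmeas]
          exact integrableOn_const hSfin.ne
        have hpt : ∀ y, S.indicator (fun _ => m*M) y - min 1 (‖y‖^2) * J y ≤
            (Real.exp ⟪p, y⟫ - 1 -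
              Set.indicator {y : EuclideanSpace ℝ (Fin N) | ‖y‖ < 1}
                (fun y => ⟪p, y⟫) y) * J y := by
          intro y
          have hminJ : 0 ≤ min 1 (‖y‖^2) * J y :=
            mul_nonneg (le_min zero_le_one (sq_nonneg _)) (hJnn y)
          have hbase : -(min 1 (‖y‖^2)) ≤ Real.exp ⟪p, y⟫ - 1 -
              Set.indicator {y : EuclideanSpace ℝ (Fin N) | ‖y‖ < 1}
                (fun y => ⟪p, y⟫) y := by
            by_cases h1 : ‖y‖ < 1
            · rw [Set.indicator_of_mem (show y ∈ {y : EuclideanSpace ℝ (Fin N) | ‖y‖ < 1}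
                from h1)]
              have he := Real.add_one_le_exp ⟪p, y⟫
              have hm0 : -(min 1 (‖y‖^2)) ≤ 0 :=
                neg_nonpos.2 (le_min zero_le_one (sq_nonneg _))
              linarith only [he, hm0]
            · rw [Set.indicator_of_notMem (show y ∉ {y : EuclideanSpace ℝ (Fin N) | ‖y‖ < 1}
                from h1), sub_zero]
              have hmin : min 1 (‖y‖^2) = 1 :=
                min_eq_left (by nlinarith [norm_nonneg y, not_lt.1 h1])
              rw [hmin]
              linarith only [(Real.exp_pos ⟪p, y⟫).le]
          have hbaseJ : -(min 1 (‖y‖^2) * J y) ≤ (Real.exp ⟪p, y⟫ - 1 -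
              Set.indicator {y : EuclideanSpace ℝ (Fin N) | ‖y‖ < 1}
                (fun y => ⟪p, y⟫) y) * J y := by
            have h2 := mul_le_mul_of_nonneg_right hbase (hJnn y)
            rw [neg_mul] at h2
            exact h2
          by_cases hyS : y ∈ S
          · rw [Set.indicator_of_mem hyS]
            have hyz : ‖y - z‖ ≤ ρ₀/8 := by
              rw [← dist_eq_norm]; exact Metric.mem_closedBall.1 hyS
            have hy1 : 5*ρ₀/8 ≤ ‖y‖ := by
              have h3 : ‖z‖ - ‖y‖ ≤ ‖z - y‖ := norm_sub_norm_le z y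
              rw [norm_sub_rev] at h3
              linarith only [hzn ▸ h3, hyz]
            have hy2 : ‖y‖ ≤ 7*ρ₀/8 := by
              have h3 : ‖y‖ - ‖z‖ ≤ ‖y - z‖ := norm_sub_norm_le y z
              linarith only [hzn ▸ h3, hyz]
            have hJy : m ≤ J y := hy₀min (hKmem y hy1 hy2)
            have hip : (5*ρ₀/8)*‖p‖ ≤ ⟪p, y⟫ := by
              have h6 : ⟪p, y - z⟫ = ⟪p, y⟫ - ⟪p, z⟫ := inner_sub_right p y z
              have h2 : ⟪p, z⟫ = (3*ρ₀/4)*‖p‖ := by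
                rw [hz, real_inner_smul_right, hw, real_inner_smul_right,
                  real_inner_self_eq_norm_sq]
                have hpn : ‖p‖ ≠ 0 := norm_ne_zero_iff.2 hp
                field_simp
              have h3 : |⟪p, y - z⟫| ≤ ‖p‖*‖y - z‖ := abs_real_inner_le_norm p _
              have h4 : ‖p‖*‖y - z‖ ≤ ‖p‖*(ρ₀/8) :=
                mul_le_mul_of_nonneg_left hyz (norm_nonneg p)
              have h5 : -(‖p‖*(ρ₀/8)) ≤ ⟪p, y - z⟫ := by
                linarith only [neg_abs_le ⟪p, y - z⟫, h3, h4]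
              linarith only [h6, h2, h5]
            have hfy : M ≤ Real.exp ⟪p, y⟫ - 1 -
                Set.indicator {y : EuclideanSpace ℝ (Fin N) | ‖y‖ < 1}
                  (fun y => ⟪p, y⟫) y := by
              have he : Real.exp ((5*ρ₀/8)*‖p‖) ≤ Real.exp ⟪p, y⟫ :=
                Real.exp_le_exp.2 hip
              have h7 : |Set.indicator {y : EuclideanSpace ℝ (Fin N) | ‖y‖ < 1}
                  (fun y => ⟪p, y⟫) y| ≤ |⟪p, y⟫| := by
                have h8 := norm_indicator_le_norm_self
                  (fun y : EuclideanSpace ℝ (Fin N) => ⟪p, y⟫) y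
                  (s := {y : EuclideanSpace ℝ (Fin N) | ‖y‖ < 1})
                simpa [Real.norm_eq_abs] using h8
              have h9 : |⟪p, y⟫| ≤ ‖p‖*‖y‖ := abs_real_inner_le_norm p y
              have h10 : ‖p‖*‖y‖ ≤ ρ₀*‖p‖ := by
                linarith only [mul_le_mul_of_nonneg_left hy2 (norm_nonneg p),
                  mul_nonneg hρ₀.le (norm_nonneg p)]
              have h11 : Set.indicator {y : EuclideanSpace ℝ (Fin N) | ‖y‖ < 1}
                  (fun y => ⟪p, y⟫) y ≤ ρ₀*‖p‖ :=
                (le_abs_self _).trans (h7.trans (h9.trans h10))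
              rw [hM]
              linarith only [he, h11]
            rcases le_or_gt M 0 with hM0 | hM0
            · have hmM : m*M ≤ 0 := mul_nonpos_iff.2 (Or.inl ⟨hm.le, hM0⟩)
              linarith only [hmM, hbaseJ]
            · have h9 : M*m ≤ M*(J y) := mul_le_mul_of_nonneg_left hJy hM0.le
              have h10 : M*(J y) ≤ (Real.exp ⟪p, y⟫ - 1 -
                  Set.indicator {y : EuclideanSpace ℝ (Fin N) | ‖y‖ < 1}
                    (fun y => ⟪p, y⟫) y) * (J y) :=
                mul_le_mul_of_nonneg_right hfy (hJnn y)
              linarith only [h9, h10, hminJ]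
          · rw [Set.indicator_of_notMem hyS]
            linarith only [hbaseJ]
        have hmono : (∫ y, (S.indicator (fun _ => m*M) y - min 1 (‖y‖^2) * J y)) ≤
            ∫ y, (Real.exp ⟪p, y⟫ - 1 -
              Set.indicator {y : EuclideanSpace ℝ (Fin N) | ‖y‖ < 1}
                (fun y => ⟪p, y⟫) y) * J y :=
          integral_mono (hgint.sub hint) (hInt p) hpt
        rw [integral_sub hgint hint, integral_indicator_const _ hSmeas, measureReal_def, hSvol] at hmono
        rw [smul_eq_mul] at hmono
        have heq : m * ν * M - I₀ =
            (volume (Metric.closedBall (0 : EuclideanSpace ℝ (Fin N)) (ρ₀/8))).toReal * (m*M)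
            - I₀ := by rw [← hνdef]; ring
        rw [heq]
        exact hmono
      -- assemble
      refine ⟨m*ν, mul_pos hm hν, ‖B‖ + m*ν*ρ₀ + m*ν + I₀,
        by linarith only [norm_nonneg B, (mul_pos hm hν).le, hI₀,
          (mul_pos (mul_pos hm hν) hρ₀).le], fun p => ?_⟩
      by_cases hp : p = 0
      · rw [hp, hH0]
        simp only [norm_zero, mul_zero, zero_div, Real.exp_zero]
        have hz3 : (0:ℝ)^3 = 0 := by norm_num
        rw [hz3]
        linarith only [hI₀, norm_nonneg B, (mul_pos (mul_pos hm hν) hρ₀).le]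
      · rw [hH p]
        have h1 : 0 ≤ ⟪p, A p⟫ := hAnn p
        have h2 : -(‖B‖*‖p‖) ≤ ⟪B, p⟫ := by
          have h3 := abs_real_inner_le_norm B p
          linarith [neg_abs_le ⟪B, p⟫]
        have h3 := hlow p hp
        have hexpm : Real.exp (ρ₀*‖p‖/2) ≤ Real.exp ((5*ρ₀/8)*‖p‖) :=
          Real.exp_le_exp.2 (by linarith only [mul_nonneg hρ₀.le (norm_nonneg p)])
        have htc : ‖p‖ ≤ 1 + ‖p‖^3 := aux_t_le (norm_nonneg p)
        have hc1 : (0:ℝ) ≤ m*ν := (mul_pos hm hν).le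
        linarith only [h1, h2, h3, mul_le_mul_of_nonneg_left hexpm hc1,
          mul_le_mul_of_nonneg_left htc (norm_nonneg B),
          mul_le_mul_of_nonneg_left htc (mul_nonneg hc1 hρ₀.le),
          mul_nonneg hc1 (pow_nonneg (norm_nonneg p) 3),
          mul_nonneg hI₀ (pow_nonneg (norm_nonneg p) 3)]

    refine ⟨?_, key⟩
    obtain ⟨c, hc, C, hC, hb⟩ := key
    have h1 := aux_tendsto c C (ρ₀ / 2) hc (by positivity)
    have h2 : Tendsto (fun p : EuclideanSpace ℝ (Fin N) => ‖p‖)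
        (Bornology.cobounded (EuclideanSpace ℝ (Fin N))) atTop :=
      tendsto_norm_cobounded_atTop
    apply tendsto_atTop_mono' _ ?_ (h1.comp h2)
    filter_upwards [h2.eventually (eventually_gt_atTop 0)] with p hp
    have h4 := hb p
    have h3 : ρ₀ / 2 * ‖p‖ = ρ₀ * ‖p‖ / 2 := by ring
    simp only [Function.comp_apply, h3]
    exact (div_le_div_iff_of_pos_right hp).2 h4
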